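/- For every real λ > 0, every real Y > 0, and every real α ∈ (-1,0), the improper integral ∫₀^∞ (1 - exp(-λ·u^Y))·u^{αY - 1} du converges and equals -(1/Y)·λ^{-α}·Γ(α), where Γ is the real Gamma function (which is finite and negative for α ∈ (-1,0)). -/

import Mathlib

open MeasureTheory Set Filter Real Topology

private lemma aux_exp_bounds (lam t : ℝ) (hlam : 0 < lam) (ht : 0 ≤ t) :
    0 ≤ 1 - Real.exp (-lam * t) ∧ 1 - Real.exp (-lam * t) ≤ lam * t := by
  constructor
  · have : Real.exp (-lam * t) ≤ 1 := by
      rw [Real.exp_le_one_iff]; nlinarith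
    linarith
  · have := Real.add_one_le_exp (-lam * t); linarith

private lemma aux_rpow_split {t : ℝ} (ht : 0 < t) (a : ℝ) :
    t * t ^ (a - 1) = t ^ a := by
  nth_rewrite 1 [← Real.rpow_one t]
  rw [← Real.rpow_add ht]
  norm_num

private lemma aux_integrable (lam α : ℝ) (hlam : 0 < lam) (hα1 : -1 < α) (hα2 : α < 0) :
    IntegrableOn (fun t : ℝ => (1 - Real.exp (-lam * t)) * t ^ (α - 1)) (Set.Ioi 0) := by
  have hcont : ContinuousOn (fun t : ℝ => (1 - Real.exp (-lam * t)) * t ^ (α - 1)) (Ioi 0) := by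
    refine ContinuousOn.mul ?_ ?_
    · exact (continuous_const.sub
        ((Real.continuous_exp).comp (continuous_const.mul continuous_id))).continuousOn
    · exact fun x hx =>
        (Real.continuousAt_rpow_const x (α - 1) (Or.inl (ne_of_gt hx))).continuousWithinAt
  have h01 : IntegrableOn (fun t : ℝ => (1 - Real.exp (-lam * t)) * t ^ (α - 1)) (Ioc 0 1) := by
    have hg : IntegrableOn (fun t : ℝ => lam * t ^ α) (Ioc 0 1) := by
      have := (intervalIntegral.intervalIntegrable_rpow' (r := α) hα1 (a := 0) (b := 1))
      rw [intervalIntegrable_iff_integrableOn_Ioc_of_le (by norm_num)] at this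
      exact this.const_mul lam
    refine Integrable.mono hg
      ((hcont.mono Ioc_subset_Ioi_self).aestronglyMeasurable measurableSet_Ioc) ?_
    filter_upwards [ae_restrict_mem measurableSet_Ioc] with t ht
    have ht0 : 0 < t := ht.1
    obtain ⟨h1, h2⟩ := aux_exp_bounds lam t hlam ht0.le
    have h3 : (0:ℝ) < t ^ (α - 1) := Real.rpow_pos_of_pos ht0 _
    rw [Real.norm_eq_abs, Real.norm_eq_abs, abs_of_nonneg (mul_nonneg h1 h3.le),
      abs_of_nonneg (by positivity)]
    calc (1 - Real.exp (-lam * t)) * t ^ (α - 1) ≤ (lam * t) * t ^ (α - 1) :=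
          mul_le_mul_of_nonneg_right h2 h3.le
      _ = lam * t ^ α := by rw [mul_assoc, aux_rpow_split ht0]
  have h1i : IntegrableOn (fun t : ℝ => (1 - Real.exp (-lam * t)) * t ^ (α - 1)) (Ioi 1) := by
    have hg : IntegrableOn (fun t : ℝ => t ^ (α - 1)) (Ioi 1) :=
      integrableOn_Ioi_rpow_of_lt (by linarith) one_pos
    refine Integrable.mono hg
      ((hcont.mono (Ioi_subset_Ioi zero_le_one)).aestronglyMeasurable measurableSet_Ioi) ?_
    filter_upwards [ae_restrict_mem measurableSet_Ioi] with t ht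
    have ht0 : (0:ℝ) < t := lt_trans one_pos ht
    obtain ⟨h1, _⟩ := aux_exp_bounds lam t hlam ht0.le
    have h2 : 1 - Real.exp (-lam * t) ≤ 1 := by
      have := Real.exp_pos (-lam * t); linarith
    have h3 : (0:ℝ) < t ^ (α - 1) := Real.rpow_pos_of_pos ht0 _
    rw [Real.norm_eq_abs, Real.norm_eq_abs, abs_of_nonneg (mul_nonneg h1 h3.le),
      abs_of_nonneg h3.le]
    nlinarith
  have : Ioi (0:ℝ) = Ioc 0 1 ∪ Ioi 1 := (Ioc_union_Ioi_eq_Ioi (by norm_num)).symm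
  rw [this]
  exact h01.union h1i

private lemma aux_exp_integrable (lam α : ℝ) (hlam : 0 < lam) (hα1 : -1 < α) :
    IntegrableOn (fun t : ℝ => Real.exp (-lam * t) * t ^ α) (Set.Ioi 0) := by
  have := integrableOn_rpow_mul_exp_neg_mul_rpow (p := 1) (s := α) (b := lam) hα1 one_pos hlam
  simp only [Real.rpow_one] at this
  exact this.congr_fun (fun x hx => by ring) measurableSet_Ioi

private lemma aux_key (lam α : ℝ) (hlam : 0 < lam) (hα1 : -1 < α) (hα2 : α < 0) :
    ∫ t in Set.Ioi (0:ℝ), (1 - Real.exp (-lam * t)) * t ^ (α - 1)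
      = -lam ^ (-α) * Real.Gamma α := by
  set F : ℝ → ℝ := fun t => (1 - Real.exp (-lam * t)) * t ^ α / α with hF
  set f' : ℝ → ℝ := fun t =>
    (lam / α) * (Real.exp (-lam * t) * t ^ α) + (1 - Real.exp (-lam * t)) * t ^ (α - 1) with hf'
  have hα_ne : α ≠ 0 := ne_of_lt hα2
  have hF0 : F 0 = 0 := by
    simp [hF, Real.zero_rpow hα_ne]
  have hderiv : ∀ x ∈ Ioi (0:ℝ), HasDerivAt F (f' x) x := by
    intro x hx
    have h1 : HasDerivAt (fun t : ℝ => 1 - Real.exp (-lam * t)) (lam * Real.exp (-lam * x)) x := by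
      have h := ((Real.hasDerivAt_exp (-lam * x)).comp x
        ((hasDerivAt_id x).const_mul (-lam))).const_sub 1
      refine h.congr_deriv ?_
      simp
      ring
    have h2 : HasDerivAt (fun t : ℝ => t ^ α) (α * x ^ (α - 1)) x :=
      Real.hasDerivAt_rpow_const (Or.inl (ne_of_gt hx))
    have h3 := (h1.mul h2).div_const α
    refine h3.congr_deriv ?_
    rw [hf']
    field_simp
  have hcont : ContinuousWithinAt F (Ici 0) 0 := by
    have hbound : ∀ᶠ t in nhdsWithin (0:ℝ) (Ici 0), ‖F t‖ ≤ lam * t ^ (α + 1) / (-α) := by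
      filter_upwards [self_mem_nhdsWithin] with t (ht : (0:ℝ) ≤ t)
      rcases eq_or_lt_of_le ht with h | h
      · rw [← h]
        simp [hF0, Real.zero_rpow (show α + 1 ≠ 0 by linarith)]
      · obtain ⟨h1, h2⟩ := aux_exp_bounds lam t hlam h.le
        have h3 : (0:ℝ) < t ^ α := Real.rpow_pos_of_pos h _
        have h4 : (1 - Real.exp (-lam * t)) * t ^ α ≤ lam * t ^ (α + 1) := by
          calc (1 - Real.exp (-lam * t)) * t ^ α ≤ (lam * t) * t ^ α :=
                mul_le_mul_of_nonneg_right h2 h3.le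
            _ = lam * t ^ (α + 1) := by
                rw [mul_assoc]
                congr 1
                have := aux_rpow_split h (α + 1)
                simpa using this
        have hFt : F t ≤ 0 :=
          div_nonpos_of_nonneg_of_nonpos (mul_nonneg h1 h3.le) hα2.le
        have hFeq : F t = (1 - Real.exp (-lam * t)) * t ^ α / α := rfl
        rw [Real.norm_eq_abs, abs_of_nonpos hFt, hFeq,
          show -((1 - Real.exp (-lam * t)) * t ^ α / α)
            = (1 - Real.exp (-lam * t)) * t ^ α / (-α) from by ring]
        exact div_le_div_of_nonneg_right h4 (by linarith)
    have hc : ContinuousWithinAt (fun t : ℝ => lam * t ^ (α + 1) / (-α)) (Ici 0) 0 :=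
      (((Real.continuousAt_rpow_const 0 (α + 1)
        (Or.inr (by linarith))).continuousWithinAt.const_mul lam).div_const (-α))
    have h0 : lam * (0:ℝ) ^ (α + 1) / (-α) = 0 := by
      simp [Real.zero_rpow (show α + 1 ≠ 0 by linarith)]
    have hc' : Tendsto (fun t : ℝ => lam * t ^ (α + 1) / (-α)) (nhdsWithin 0 (Ici 0))
        (𝓝 (lam * (0:ℝ) ^ (α + 1) / (-α))) := hc
    rw [h0] at hc'
    have := squeeze_zero_norm' hbound hc'
    show Tendsto F (nhdsWithin 0 (Ici 0)) (𝓝 (F 0))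
    rw [hF0]
    exact this
  have htop : Tendsto F atTop (𝓝 0) := by
    have h1 : Tendsto (fun t : ℝ => 1 - Real.exp (-lam * t)) atTop (𝓝 1) := by
      have hmul : Tendsto (fun t : ℝ => -lam * t) atTop atBot :=
        tendsto_id.const_mul_atTop_of_neg (by linarith)
      have h2 := Real.tendsto_exp_atBot.comp hmul
      simpa using (tendsto_const_nhds.sub h2)
    have h2 : Tendsto (fun t : ℝ => t ^ α) atTop (𝓝 0) := by
      have := tendsto_rpow_neg_atTop (y := -α) (by linarith)
      simpa using this
    have := (h1.mul h2).div_const α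
    simpa [hF] using this
  have hint1 : IntegrableOn (fun t : ℝ => (lam / α) * (Real.exp (-lam * t) * t ^ α)) (Ioi 0) :=
    (aux_exp_integrable lam α hlam hα1).const_mul _
  have hint2 := aux_integrable lam α hlam hα1 hα2
  have hint' : IntegrableOn f' (Ioi 0) := hint1.add hint2
  have h0 : ∫ x in Ioi (0:ℝ), f' x = 0 - F 0 :=
    integral_Ioi_of_hasDerivAt_of_tendsto hcont hderiv hint' htop
  rw [hF0, sub_zero] at h0
  have hsplit : ∫ x in Ioi (0:ℝ), f' x =
      (∫ x in Ioi (0:ℝ), (lam / α) * (Real.exp (-lam * x) * x ^ α)) +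
      ∫ x in Ioi (0:ℝ), (1 - Real.exp (-lam * x)) * x ^ (α - 1) :=
    integral_add hint1 hint2
  have hexp : ∫ x in Ioi (0:ℝ), Real.exp (-lam * x) * x ^ α
      = lam ^ (-(α + 1)) * Real.Gamma (α + 1) := by
    have h := integral_rpow_mul_exp_neg_mul_rpow (p := 1) (q := α) (b := lam) one_pos hα1 hlam
    simp only [Real.rpow_one, div_one] at h
    rw [show (∫ x in Ioi (0:ℝ), Real.exp (-lam * x) * x ^ α)
        = ∫ x in Ioi (0:ℝ), x ^ α * Real.exp (-lam * x) from
      setIntegral_congr_fun measurableSet_Ioi (fun x _ => by ring), h]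
    ring
  have hgamma : Real.Gamma (α + 1) = α * Real.Gamma α := Real.Gamma_add_one hα_ne
  have hmain : ∫ x in Ioi (0:ℝ), (1 - Real.exp (-lam * x)) * x ^ (α - 1)
      = -(lam / α) * (lam ^ (-(α + 1)) * Real.Gamma (α + 1)) := by
    rw [hsplit] at h0
    rw [integral_const_mul, hexp] at h0
    linarith
  rw [hmain, hgamma]
  have hpow : lam * lam ^ (-(α + 1)) = lam ^ (-α) := by
    nth_rewrite 1 [← Real.rpow_one lam]
    rw [← Real.rpow_add hlam, show (1:ℝ) + -(α + 1) = -α from by ring]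
  have hstep : -(lam / α) * (lam ^ (-(α + 1)) * (α * Real.Gamma α))
      = -(lam * lam ^ (-(α + 1))) * Real.Gamma α := by
    field_simp
  rw [hstep, hpow]

/-- For `λ > 0`, `Y > 0`, `α ∈ (-1,0)`, the improper integral
`∫₀^∞ (1 - exp(-λ·u^Y))·u^{αY-1} du` converges and equals
`-(1/Y)·λ^{-α}·Γ(α)`. -/
theorem stmt8 (lam Y α : ℝ) (hlam : 0 < lam) (hY : 0 < Y)
    (hα1 : -1 < α) (hα2 : α < 0) :
    IntegrableOn (fun u : ℝ => (1 - Real.exp (-lam * u ^ Y)) * u ^ (α * Y - 1))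
      (Set.Ioi 0) ∧
    ∫ u in Set.Ioi (0 : ℝ), (1 - Real.exp (-lam * u ^ Y)) * u ^ (α * Y - 1)
      = -(1/Y) * lam ^ (-α) * Real.Gamma α := by
  set g : ℝ → ℝ := fun t => (1 - Real.exp (-lam * t)) * t ^ (α - 1) with hg
  have hgint := aux_integrable lam α hlam hα1 hα2
  have hgval := aux_key lam α hlam hα1 hα2
  have heq : ∀ x ∈ Ioi (0:ℝ),
      x ^ (Y - 1) • g (x ^ Y) = (1 - Real.exp (-lam * x ^ Y)) * x ^ (α * Y - 1) := by
    intro x hx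
    have hx0 : (0:ℝ) < x := hx
    simp only [hg, smul_eq_mul]
    rw [← Real.rpow_mul hx0.le]
    rw [show x ^ (Y - 1) * ((1 - Real.exp (-lam * x ^ Y)) * x ^ (Y * (α - 1)))
        = (1 - Real.exp (-lam * x ^ Y)) * (x ^ (Y - 1) * x ^ (Y * (α - 1))) from by ring]
    rw [← Real.rpow_add hx0, show Y - 1 + Y * (α - 1) = α * Y - 1 from by ring]
  constructor
  · have := (integrableOn_Ioi_comp_rpow_iff' g (ne_of_gt hY)).2 hgint
    exact this.congr_fun heq measurableSet_Ioi
  · have hsub := integral_comp_rpow_Ioi g (p := Y) (ne_of_gt hY)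
    have habs : |Y| = Y := abs_of_pos hY
    rw [habs] at hsub
    have h1 : ∫ x in Ioi (0:ℝ), (Y * x ^ (Y - 1)) • g (x ^ Y)
        = Y * ∫ x in Ioi (0:ℝ), x ^ (Y - 1) • g (x ^ Y) := by
      simp_rw [mul_smul]
      exact integral_smul Y _
    have h2 : ∫ x in Ioi (0:ℝ), x ^ (Y - 1) • g (x ^ Y)
        = ∫ u in Set.Ioi (0:ℝ), (1 - Real.exp (-lam * u ^ Y)) * u ^ (α * Y - 1) :=
      setIntegral_congr_fun measurableSet_Ioi heq
    rw [h1, h2, hgval] at hsub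
    have hY' : Y ≠ 0 := ne_of_gt hY
    field_simp at hsub ⊢
    linarith
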